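/- For every r with 0 < r < 1, the direct circular orbit γ_D^r(t) = (q(t),p(t)) with q(t) = (r cos((1−r^{-3/2})t), r sin((1−r^{-3/2})t)) and p(t) = (r^{-1/2} sin((1−r^{-3/2})t), −r^{-1/2} cos((1−r^{-3/2})t)) solves Hamilton's equations of the rotating Kepler problem (q̇₁ = p₁ − q₂, q̇₂ = p₂ + q₁, ṗ₁ = −q₁/|q|³ − p₂, ṗ₂ = −q₂/|q|³ + p₁); it lies on the energy level H_R(γ_D^r(t)) = −1/(2r) − √r for all t, and its action over one period equals ∫₀^{2π/(r^{-3/2}−1)} ⟨−q(t), ṗ(t)⟩ dt = 2π√r. -/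

import Mathlib

/-- The rotating Kepler Hamiltonian `H_R(q,p) = ½|p|² − 1/|q| + q₁p₂ − q₂p₁`. -/
noncomputable def HR (x : (ℝ × ℝ) × (ℝ × ℝ)) : ℝ :=
  (1/2) * (x.2.1^2 + x.2.2^2) - 1 / Real.sqrt (x.1.1^2 + x.1.2^2)
    + x.1.1 * x.2.2 - x.1.2 * x.2.1

/-- For every `0 < r < 1`, the direct circular orbit of radius `r` solves
Hamilton's equations of the rotating Kepler problem, lies on the energy level
`−1/(2r) − √r`, and has action `∫₀^{2π/(r^{-3/2}−1)} ⟨−q, ṗ⟩ dt = 2π√r`. -/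
theorem direct_orbit_action (r : ℝ) (hr0 : 0 < r) (hr1 : r < 1) :
    let ω : ℝ := 1 - r ^ (-(3:ℝ)/2)
    let q1 : ℝ → ℝ := fun t => r * Real.cos (ω * t)
    let q2 : ℝ → ℝ := fun t => r * Real.sin (ω * t)
    let p1 : ℝ → ℝ := fun t => r ^ (-(1:ℝ)/2) * Real.sin (ω * t)
    let p2 : ℝ → ℝ := fun t => -(r ^ (-(1:ℝ)/2)) * Real.cos (ω * t)
    (∀ t : ℝ,
      HasDerivAt q1 (p1 t - q2 t) t ∧
      HasDerivAt q2 (p2 t + q1 t) t ∧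
      HasDerivAt p1 (-(q1 t) / (Real.sqrt ((q1 t)^2 + (q2 t)^2))^3 - p2 t) t ∧
      HasDerivAt p2 (-(q2 t) / (Real.sqrt ((q1 t)^2 + (q2 t)^2))^3 + p1 t) t) ∧
    (∀ t : ℝ, HR ((q1 t, q2 t), (p1 t, p2 t)) = -(1/(2*r)) - Real.sqrt r) ∧
    (∫ t in (0:ℝ)..(2 * Real.pi / (r ^ (-(3:ℝ)/2) - 1)),
        (-(q1 t) * deriv p1 t + -(q2 t) * deriv p2 t))
      = 2 * Real.pi * Real.sqrt r := by
  intro ω q1 q2 p1 p2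
  have hrne : r ≠ 0 := ne_of_gt hr0
  have hω : ω = 1 - r ^ (-(3:ℝ)/2) := rfl
  have ha2 : r ^ (-(1:ℝ)/2) * r ^ (-(1:ℝ)/2) = r⁻¹ := by
    rw [← Real.rpow_add hr0, ← Real.rpow_neg_one r]; norm_num
  have h32 : r ^ (-(3:ℝ)/2) = r ^ (-(1:ℝ)/2) * r⁻¹ := by
    rw [← Real.rpow_neg_one r, ← Real.rpow_add hr0]; norm_num
  have hsq : Real.sqrt r = r * r ^ (-(1:ℝ)/2) := by
    rw [Real.sqrt_eq_rpow]
    nth_rewrite 2 [← Real.rpow_one r]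
    rw [← Real.rpow_add hr0]; norm_num
  have hrω : r * ω = r - r ^ (-(1:ℝ)/2) := by
    rw [hω, h32]; field_simp
  have haω : r ^ (-(1:ℝ)/2) * ω = r ^ (-(1:ℝ)/2) - r⁻¹ * r⁻¹ := by
    rw [hω, h32]; linear_combination (-(r⁻¹)) * ha2
  have hnorm : ∀ t : ℝ, Real.sqrt ((q1 t)^2 + (q2 t)^2) = r := by
    intro t
    have : (q1 t)^2 + (q2 t)^2 = r^2 := by
      simp only [q1, q2]
      linear_combination r^2 * Real.sin_sq_add_cos_sq (ω * t)
    rw [this, Real.sqrt_sq hr0.le]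
  -- derivatives
  have hd1 : ∀ t : ℝ, HasDerivAt q1 (r * (-Real.sin (ω * t) * (ω * 1))) t := by
    intro t; exact (((hasDerivAt_id t).const_mul ω).cos).const_mul r
  have hd2 : ∀ t : ℝ, HasDerivAt q2 (r * (Real.cos (ω * t) * (ω * 1))) t := by
    intro t; exact (((hasDerivAt_id t).const_mul ω).sin).const_mul r
  have hd3 : ∀ t : ℝ, HasDerivAt p1 (r ^ (-(1:ℝ)/2) * (Real.cos (ω * t) * (ω * 1))) t := by
    intro t; exact (((hasDerivAt_id t).const_mul ω).sin).const_mul _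
  have hd4 : ∀ t : ℝ, HasDerivAt p2 (-(r ^ (-(1:ℝ)/2)) * (-Real.sin (ω * t) * (ω * 1))) t := by
    intro t; exact (((hasDerivAt_id t).const_mul ω).cos).const_mul _
  refine ⟨fun t => ⟨?_, ?_, ?_, ?_⟩, ?_, ?_⟩
  · convert hd1 t using 1
    simp only [p1, q2]
    linear_combination (Real.sin (ω * t)) * hrω
  · convert hd2 t using 1
    simp only [p2, q1]
    linear_combination (-(Real.cos (ω * t))) * hrω
  · convert hd3 t using 1
    rw [hnorm t]
    simp only [q1, p2]
    have h1 : -(r * Real.cos (ω * t)) / r ^ 3 = -(r⁻¹ * r⁻¹ * Real.cos (ω * t)) := by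
      field_simp
    rw [h1]
    linear_combination (-(Real.cos (ω * t))) * haω
  · convert hd4 t using 1
    rw [hnorm t]
    simp only [q2, p1]
    have h1 : -(r * Real.sin (ω * t)) / r ^ 3 = -(r⁻¹ * r⁻¹ * Real.sin (ω * t)) := by
      field_simp
    rw [h1]
    linear_combination (-(Real.sin (ω * t))) * haω
  · intro t
    have hpyth := Real.sin_sq_add_cos_sq (ω * t)
    simp only [HR]
    rw [hnorm t, hsq]
    simp only [q1, q2, p1, p2]
    have h1 : (1:ℝ) / r = r⁻¹ := one_div r
    rw [h1]
    linear_combination ((1/2) * (r ^ (-(1:ℝ)/2) * r ^ (-(1:ℝ)/2))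
      - r * r ^ (-(1:ℝ)/2)) * hpyth + (1/2) * ha2
  · have key : ∀ t : ℝ, (-(q1 t) * deriv p1 t + -(q2 t) * deriv p2 t)
        = Real.sqrt r * (r ^ (-(3:ℝ)/2) - 1) := by
      intro t
      rw [(hd3 t).deriv, (hd4 t).deriv, hsq]
      simp only [q1, q2]
      have hpyth := Real.sin_sq_add_cos_sq (ω * t)
      linear_combination (-(r * r ^ (-(1:ℝ)/2) * ω)) * hpyth
        + (-(r * r ^ (-(1:ℝ)/2))) * hω
    simp only [key, intervalIntegral.integral_const, smul_eq_mul]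
    have hX : (1:ℝ) < r ^ (-(3:ℝ)/2) := by
      exact (Real.one_lt_rpow_iff_of_pos hr0).mpr (Or.inr ⟨hr1, by norm_num⟩)
    have hXne : r ^ (-(3:ℝ)/2) - 1 ≠ 0 := by linarith
    field_simp
    linear_combination (2 * Real.pi) * mul_inv_cancel₀ (show r ^ (-(3/2:ℝ)) - 1 ≠ 0 by rw [← neg_div]; exact hXne)
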